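/- Let l divide n, 1 ≤ p,q ≤ n/l, and 1 ≤ m ≤ l. Then in U(Q(n))/I_χ: π(e_{l(p−1)+m, l(q−1)+1}^{(m)}) = Σ_{k=1}^{m} π(e_{l(p−1)+k, l(q−1)+k}) and π(f_{l(p−1)+m, l(q−1)+1}^{(m)}) = Σ_{k=1}^{m} (−1)^{k−1} π(f_{l(p−1)+k, l(q−1)+k}). -/
import Mathlib


noncomputable section
open scoped Classical

/-! # The universal enveloping superalgebra `U(Q(n))` of the queer Lie superalgebra

`U(Q(n))` is presented by even generators `e i j` and odd generators `f i j`
(`1 ≤ i,j ≤ n`) subject to the relations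
`[e i j, e k l] = δ_{jk} e i l - δ_{li} e k j`,
`[e i j, f k l] = δ_{jk} f i l - δ_{li} f k j`,
`f i j * f k l + f k l * f i j = δ_{jk} e i l + δ_{li} e k j`. -/

/-- Generators of `U(Q(n))`: `E i j` (even) and `F i j` (odd). -/
inductive QGen (n : ℕ) : Type
  | E : Fin n → Fin n → QGen n
  | F : Fin n → Fin n → QGen n

/-- Kronecker delta. -/
def kd {n : ℕ} (i j : Fin n) : ℂ := if i = j then 1 else 0

/-- The defining relations of `U(Q(n))`. -/
inductive QRel (n : ℕ) : FreeAlgebra ℂ (QGen n) → FreeAlgebra ℂ (QGen n) → Prop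
  | ee (i j k l : Fin n) : QRel n
      (FreeAlgebra.ι ℂ (QGen.E i j) * FreeAlgebra.ι ℂ (QGen.E k l) -
        FreeAlgebra.ι ℂ (QGen.E k l) * FreeAlgebra.ι ℂ (QGen.E i j))
      (kd j k • FreeAlgebra.ι ℂ (QGen.E i l) - kd l i • FreeAlgebra.ι ℂ (QGen.E k j))
  | ef (i j k l : Fin n) : QRel n
      (FreeAlgebra.ι ℂ (QGen.E i j) * FreeAlgebra.ι ℂ (QGen.F k l) -
        FreeAlgebra.ι ℂ (QGen.F k l) * FreeAlgebra.ι ℂ (QGen.E i j))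
      (kd j k • FreeAlgebra.ι ℂ (QGen.F i l) - kd l i • FreeAlgebra.ι ℂ (QGen.F k j))
  | ff (i j k l : Fin n) : QRel n
      (FreeAlgebra.ι ℂ (QGen.F i j) * FreeAlgebra.ι ℂ (QGen.F k l) +
        FreeAlgebra.ι ℂ (QGen.F k l) * FreeAlgebra.ι ℂ (QGen.F i j))
      (kd j k • FreeAlgebra.ι ℂ (QGen.E i l) + kd l i • FreeAlgebra.ι ℂ (QGen.E k j))

/-- The universal enveloping superalgebra `U(Q(n))`. -/
abbrev UQ (n : ℕ) := RingQuot (QRel n)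

/-- The generator `e i j` of `U(Q(n))`. -/
def Ue {n : ℕ} (i j : Fin n) : UQ n :=
  RingQuot.mkAlgHom ℂ (QRel n) (FreeAlgebra.ι ℂ (QGen.E i j))

/-- The generator `f i j` of `U(Q(n))`. -/
def Uf {n : ℕ} (i j : Fin n) : UQ n :=
  RingQuot.mkAlgHom ℂ (QRel n) (FreeAlgebra.ι ℂ (QGen.F i j))

/-- Sergeev's elements `e_{ij}^{(m)}` and `f_{ij}^{(m)}` of `U(Q(n))`, defined recursively by
`e^{(0)} = δ`, `f^{(0)} = 0`,
`e_{ij}^{(m)} = Σ_k e_{ik} e_{kj}^{(m-1)} + (-1)^{m+1} Σ_k f_{ik} f_{kj}^{(m-1)}`,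
`f_{ij}^{(m)} = Σ_k e_{ik} f_{kj}^{(m-1)} + (-1)^{m+1} Σ_k f_{ik} e_{kj}^{(m-1)}`. -/
def efU (n : ℕ) : ℕ → (Fin n → Fin n → UQ n) × (Fin n → Fin n → UQ n)
  | 0 => (fun i j => algebraMap ℂ (UQ n) (kd i j), fun _ _ => 0)
  | m + 1 =>
      (fun i j => (∑ k, Ue i k * (efU n m).1 k j) +
        (-1 : ℂ) ^ m • ∑ k, Uf i k * (efU n m).2 k j,
       fun i j => (∑ k, Ue i k * (efU n m).2 k j) +
        (-1 : ℂ) ^ m • ∑ k, Uf i k * (efU n m).1 k j)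

/-- `e_{ij}^{(m)}`. -/
def eU {n : ℕ} (m : ℕ) (i j : Fin n) : UQ n := (efU n m).1 i j
/-- `f_{ij}^{(m)}`. -/
def fU {n : ℕ} (m : ℕ) (i j : Fin n) : UQ n := (efU n m).2 i j

/-- For `l ∣ n`, the index `l(p-1)+i` of `{1,…,n}` (0-based: block `p`, position `i`). -/
def bidx {n l : ℕ} (h : l ∣ n) (p : Fin (n / l)) (i : Fin l) : Fin n :=
  ⟨l * p.val + i.val, by
    have h1 : i.val < l := i.isLt
    have h2 : p.val + 1 ≤ n / l := p.isLt
    have h3 : l * (p.val + 1) ≤ l * (n / l) := Nat.mul_le_mul_left l h2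
    have h4 : n / l * l ≤ n := Nat.div_mul_le_self n l
    have h5 : l * (p.val + 1) = l * p.val + l := Nat.mul_succ l p.val
    have h6 : l * (n / l) = n / l * l := Nat.mul_comm l (n / l)
    omega⟩
set_option linter.unusedVariables false

/-! # The character `χ`, the left ideal `I_χ` and the finite W-algebra data

Here `l ∣ n` and `χ` corresponds to the even nilpotent element of `Q(n)` all of whose
Jordan blocks have size `l`.  The subalgebra `m = ⊕_{j<0} g_j` is spanned by the
elements `e_{l(p-1)+i+k, l(q-1)+i}` and `f_{l(p-1)+i+k, l(q-1)+i}` (`k ≥ 1`), and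
`χ(e_{l(p-1)+i+1, l(q-1)+i}) = δ_{pq}` and `χ = 0` on the other basis elements. -/

/-- The set of elements `a - χ(a)` for `a` ranging over the standard basis of `m`;
(rows/columns written 0-based: `a` is the position of the row inside its block `p`,
`b` the position of the column inside its block `q`, with `b < a`). -/
def mSet (n l : ℕ) (h : l ∣ n) : Set (UQ n) :=
  { x : UQ n | ∃ (p q : Fin (n / l)) (a b : Fin l), b.val < a.val ∧
      (x = Ue (bidx h p a) (bidx h q b) -
            algebraMap ℂ (UQ n) (if a.val = b.val + 1 ∧ p = q then 1 else 0) ∨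
       x = Uf (bidx h p a) (bidx h q b)) }

/-- The left ideal `I_χ` of `U(Q(n))` generated by the `a - χ(a)`, `a ∈ m`. -/
def Ichi (n l : ℕ) (h : l ∣ n) : Submodule (UQ n) (UQ n) :=
  Submodule.span (UQ n) (mSet n l h)

/-- The quotient `U(Q(n))/I_χ` (as a `ℂ`-vector space). -/
abbrev Wq (n l : ℕ) (h : l ∣ n) := UQ n ⧸ (Ichi n l h).restrictScalars ℂ

/-- The quotient map `π : U(Q(n)) → U(Q(n))/I_χ`. -/
def piq (n l : ℕ) (h : l ∣ n) : UQ n →ₗ[ℂ] Wq n l h :=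
  ((Ichi n l h).restrictScalars ℂ).mkQ

/-- `y` super-commutes with `m` into `I_χ`:  `[a, y] ∈ I_χ` for every `a` in the standard
basis of `m`.  Here the super-commutator of the odd element `f` with (the possibly
non-homogeneous) `y` is `f * y - σ(y) * f`, where `σ` is the parity involution of
`U(Q(n))` (the algebra automorphism fixing the `e`'s and negating the `f`'s). -/
def Wcond {n l : ℕ} (h : l ∣ n) (σ : UQ n →ₐ[ℂ] UQ n) (y : UQ n) : Prop :=
  ∀ (p q : Fin (n / l)) (a b : Fin l), b.val < a.val →
    (Ue (bidx h p a) (bidx h q b) * y - y * Ue (bidx h p a) (bidx h q b) ∈ Ichi n l h) ∧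
    (Uf (bidx h p a) (bidx h q b) * y - σ y * Uf (bidx h p a) (bidx h q b) ∈ Ichi n l h)

/-- The finite W-algebra `W_χ = {π(y) | [a, y] ∈ I_χ for all a ∈ m}`, as a subset of
`U(Q(n))/I_χ`.  (Its product is `π(y₁)·π(y₂) = π(y₁y₂)`.) -/
def WchiSet (n l : ℕ) (h : l ∣ n) (σ : UQ n →ₐ[ℂ] UQ n) : Set (Wq n l h) :=
  { w : Wq n l h | ∃ y : UQ n, Wcond h σ y ∧ piq n l h y = w }

/-- The standard basis elements of the parabolic subalgebra `p = ⊕_{j≥0} g_j`. -/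
def pSet (n l : ℕ) (h : l ∣ n) : Set (UQ n) :=
  { x : UQ n | ∃ (p q : Fin (n / l)) (a b : Fin l), a.val ≤ b.val ∧
      (x = Ue (bidx h p a) (bidx h q b) ∨ x = Uf (bidx h p a) (bidx h q b)) }

/-- The standard basis elements of the nilradical `n = ⊕_{j>0} g_j` of `p`. -/
def nSet (n l : ℕ) (h : l ∣ n) : Set (UQ n) :=
  { x : UQ n | ∃ (p q : Fin (n / l)) (a b : Fin l), a.val < b.val ∧
      (x = Ue (bidx h p a) (bidx h q b) ∨ x = Uf (bidx h p a) (bidx h q b)) }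

/-- The kernel of the Harish-Chandra projection `ϑ : U(p) → U(g₀)`, realized inside
`U(Q(n))`: the `ℂ`-span of `U(p)·n`.  (By the PBW theorem, `U(g) = U(p) ⊕ I_χ` and
`U(p) = U(g₀) ⊕ U(p)n`, so for `y ∈ U(g)`, `ϑ(pr(y)) = t` iff
`y - t ∈ I_χ + U(p)n`.) -/
def Lspan (n l : ℕ) (h : l ∣ n) : Submodule ℂ (UQ n) :=
  Submodule.span ℂ
    { x : UQ n | ∃ u ∈ Algebra.adjoin ℂ (pSet n l h), ∃ g ∈ nSet n l h, x = u * g }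

/-- A descriptor of a generator of `U(p)`:  `(b, p, q, a, c)` is
`e_{l(p-1)+(a+1), l(q-1)+(c+1)}` if `b = false` and `f_{…}` if `b = true`
(required: `a ≤ c`). -/
def pgElem {n l : ℕ} (h : l ∣ n) :
    Bool × Fin (n / l) × Fin (n / l) × Fin l × Fin l → UQ n
  | (b, p, q, a, c) => (if b then Uf else Ue) (bidx h p a) (bidx h q c)

/-- Kazhdan degree `2k+2` of a `p`-generator of block offset `k = c - a`. -/
def pgDeg {l m : ℕ} (d : Bool × Fin m × Fin m × Fin l × Fin l) : ℕ :=
  2 * (d.2.2.2.2.val - d.2.2.2.1.val) + 2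

/-- Weight `2k` of a `p`-generator of block offset `k = c - a`. -/
def pgWt {l m : ℕ} (d : Bool × Fin m × Fin m × Fin l × Fin l) : ℕ :=
  2 * (d.2.2.2.2.val - d.2.2.2.1.val)

/-- Monomials in the generators of `U(p)` which are "lower" than bidegree
(Kazhdan degree `D`, weight `W`): either of Kazhdan degree `< D`, or of Kazhdan
degree `≤ D` and weight `< W`. -/
def LowSet (n l : ℕ) (h : l ∣ n) (D W : ℕ) : Set (UQ n) :=
  { x : UQ n | ∃ L : List (Bool × Fin (n / l) × Fin (n / l) × Fin l × Fin l),
      (∀ d ∈ L, d.2.2.2.1.val ≤ d.2.2.2.2.val) ∧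
      x = (L.map (pgElem h)).prod ∧
      ((L.map pgDeg).sum < D ∨ ((L.map pgDeg).sum ≤ D ∧ (L.map pgWt).sum < W)) }

/-- The span of the "lower" monomials. -/
def LowSpan (n l : ℕ) (h : l ∣ n) (D W : ℕ) : Submodule ℂ (UQ n) :=
  Submodule.span ℂ (LowSet n l h D W)

/-! # The super tensor power `U(Q(m))^{⊗l}`

Modeled as the superalgebra with generators `x^i_{pq} = 1^{⊗(l-i)} ⊗ e_{pq} ⊗ 1^{⊗(i-1)}`
(even) and `ξ^i_{pq} = 1^{⊗(l-i)} ⊗ f_{pq} ⊗ 1^{⊗(i-1)}` (odd), subject to the `U(Q(m))`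
relations in each tensor slot and to (super-)commutation between different slots. -/

/-- Generators of `U(Q(m))^{⊗l}`: `X i p q` is `x^i_{pq}` and `Xi i p q` is `ξ^i_{pq}`
(`i : Fin l` is the 0-based tensor slot, counted from the right). -/
inductive TGen (m l : ℕ) : Type
  | X : Fin l → Fin m → Fin m → TGen m l
  | Xi : Fin l → Fin m → Fin m → TGen m l

/-- Kronecker delta on slots. -/
def kdl {l : ℕ} (i j : Fin l) : ℂ := if i = j then 1 else 0

/-- The defining relations of `U(Q(m))^{⊗l}`. -/
inductive TRel (m l : ℕ) : FreeAlgebra ℂ (TGen m l) → FreeAlgebra ℂ (TGen m l) → Prop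
  | xx (i i' : Fin l) (p q r s : Fin m) : TRel m l
      (FreeAlgebra.ι ℂ (TGen.X i p q) * FreeAlgebra.ι ℂ (TGen.X i' r s) -
        FreeAlgebra.ι ℂ (TGen.X i' r s) * FreeAlgebra.ι ℂ (TGen.X i p q))
      ((kdl i i' * kd q r) • FreeAlgebra.ι ℂ (TGen.X i p s) -
        (kdl i i' * kd s p) • FreeAlgebra.ι ℂ (TGen.X i' r q))
  | xxi (i i' : Fin l) (p q r s : Fin m) : TRel m l
      (FreeAlgebra.ι ℂ (TGen.X i p q) * FreeAlgebra.ι ℂ (TGen.Xi i' r s) -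
        FreeAlgebra.ι ℂ (TGen.Xi i' r s) * FreeAlgebra.ι ℂ (TGen.X i p q))
      ((kdl i i' * kd q r) • FreeAlgebra.ι ℂ (TGen.Xi i p s) -
        (kdl i i' * kd s p) • FreeAlgebra.ι ℂ (TGen.Xi i' r q))
  | xixi (i i' : Fin l) (p q r s : Fin m) : TRel m l
      (FreeAlgebra.ι ℂ (TGen.Xi i p q) * FreeAlgebra.ι ℂ (TGen.Xi i' r s) +
        FreeAlgebra.ι ℂ (TGen.Xi i' r s) * FreeAlgebra.ι ℂ (TGen.Xi i p q))
      ((kdl i i' * kd q r) • FreeAlgebra.ι ℂ (TGen.X i p s) +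
        (kdl i i' * kd s p) • FreeAlgebra.ι ℂ (TGen.X i' r q))

/-- The superalgebra `U(Q(m))^{⊗l}`. -/
abbrev TQ (m l : ℕ) := RingQuot (TRel m l)

/-- `x^i_{pq} := 1^{⊗(l-i)} ⊗ e_{pq} ⊗ 1^{⊗(i-1)} ∈ U(Q(m))^{⊗l}`. -/
def xT {m l : ℕ} (i : Fin l) (p q : Fin m) : TQ m l :=
  RingQuot.mkAlgHom ℂ (TRel m l) (FreeAlgebra.ι ℂ (TGen.X i p q))

/-- `ξ^i_{pq} := 1^{⊗(l-i)} ⊗ f_{pq} ⊗ 1^{⊗(i-1)} ∈ U(Q(m))^{⊗l}`. -/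
def xiT {m l : ℕ} (i : Fin l) (p q : Fin m) : TQ m l :=
  RingQuot.mkAlgHom ℂ (TRel m l) (FreeAlgebra.ι ℂ (TGen.Xi i p q))

/-! # The super-Yangian `Y(Q(n))` -/

/-- The index set `{±1, …, ±n}`:  `(false, a)` is the positive index `a` (even),
`(true, a)` is the negative index `-a` (odd). -/
abbrev QIdx (n : ℕ) := Bool × Fin n

/-- Negation `i ↦ -i` on indices. -/
def qneg {n : ℕ} (i : QIdx n) : QIdx n := (!i.1, i.2)

/-- The parity `p(i)`: `0` for positive `i`, `1` for negative `i`. -/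
def qpar {n : ℕ} (i : QIdx n) : ℕ := if i.1 then 1 else 0

/-- Kronecker delta on `{±1, …, ±n}`. -/
def kdq {n : ℕ} (i j : QIdx n) : ℂ := if i = j then 1 else 0

/-- Generators of `Y(Q(n))`: `T m i j` encodes `T^{(m+1)}_{i,j}`. -/
inductive YGen (n : ℕ) : Type
  | T : ℕ → QIdx n → QIdx n → YGen n

/-- `T^{(m)}_{i,j}` in the free algebra, with `T^{(0)}_{i,j} = δ_{ij}`. -/
def Tf {n : ℕ} : ℕ → QIdx n → QIdx n → FreeAlgebra ℂ (YGen n)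
  | 0, i, j => algebraMap ℂ _ (kdq i j)
  | m + 1, i, j => FreeAlgebra.ι ℂ (YGen.T m i j)

/-- The super-commutator `[T^{(a)}_{i,j}, T^{(b)}_{k,l}]` in the free algebra. -/
def ybr {n : ℕ} (a : ℕ) (i j : QIdx n) (b : ℕ) (k l : QIdx n) :
    FreeAlgebra ℂ (YGen n) :=
  Tf a i j * Tf b k l -
    ((-1 : ℂ) ^ ((qpar i + qpar j) * (qpar k + qpar l))) • (Tf b k l * Tf a i j)

/-- The defining relations of the super-Yangian `Y(Q(n))`: for `M, R ≥ 1`,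
`(-1)^{p(i)p(k)+p(i)p(l)+p(k)p(l)} ([T^{(M+1)}_{ij}, T^{(R-1)}_{kl}] - [T^{(M-1)}_{ij}, T^{(R+1)}_{kl}])
 = T^{(M)}_{kj}T^{(R-1)}_{il} + T^{(M-1)}_{kj}T^{(R)}_{il} - T^{(R-1)}_{kj}T^{(M)}_{il}
   - T^{(R)}_{kj}T^{(M-1)}_{il}
   + (-1)^{p(k)+p(l)} (-T^{(M)}_{-k,j}T^{(R-1)}_{-i,l} + T^{(M-1)}_{-k,j}T^{(R)}_{-i,l}
       + T^{(R-1)}_{k,-j}T^{(M)}_{i,-l} - T^{(R)}_{k,-j}T^{(M-1)}_{i,-l})`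
(here `M = m+1`, `R = r+1`), together with `T^{(m)}_{-i,-j} = (-1)^m T^{(m)}_{i,j}`. -/
inductive YRel (n : ℕ) : FreeAlgebra ℂ (YGen n) → FreeAlgebra ℂ (YGen n) → Prop
  | quad (m r : ℕ) (i j k l : QIdx n) : YRel n
      (((-1 : ℂ) ^ (qpar i * qpar k + qpar i * qpar l + qpar k * qpar l)) •
        (ybr (m + 2) i j r k l - ybr m i j (r + 2) k l))
      (Tf (m + 1) k j * Tf r i l + Tf m k j * Tf (r + 1) i l -
        Tf r k j * Tf (m + 1) i l - Tf (r + 1) k j * Tf m i l +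
        ((-1 : ℂ) ^ (qpar k + qpar l)) •
          (-(Tf (m + 1) (qneg k) j * Tf r (qneg i) l) +
            Tf m (qneg k) j * Tf (r + 1) (qneg i) l +
            Tf r k (qneg j) * Tf (m + 1) i (qneg l) -
            Tf (r + 1) k (qneg j) * Tf m i (qneg l)))
  | par (m : ℕ) (i j : QIdx n) : YRel n
      (Tf (m + 1) (qneg i) (qneg j)) (((-1 : ℂ) ^ (m + 1)) • Tf (m + 1) i j)

/-- The super-Yangian `Y(Q(n))`. -/
abbrev YQ (n : ℕ) := RingQuot (YRel n)

/-- The generator `T^{(m)}_{i,j}` of `Y(Q(n))` (with `T^{(0)}_{i,j} = δ_{ij}`). -/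
def TY {n : ℕ} (m : ℕ) (i j : QIdx n) : YQ n :=
  RingQuot.mkAlgHom ℂ (YRel n) (Tf m i j)

/-! # Values of the homomorphisms `U`, `ev`, `ēv` on the generators of `Y(Q(n))`,
and the explicit sums appearing in the main theorems. -/

/-- The value of the homomorphism `U : Y(Q(n)) → U(Q(n))` on the generator
`T^{(r)}_{i,j}`:  `U(T^{(r)}_{i,j}) = (-1)^r e^{(r)}_{j,i}`,
`U(T^{(r)}_{-i,j}) = (-1)^r f^{(r)}_{j,i}` for `i, j > 0`, and the values on the other
generators are forced by `T^{(r)}_{-i,-j} = (-1)^r T^{(r)}_{i,j}`. -/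
def Uval {n : ℕ} (r : ℕ) (i j : QIdx n) : UQ n :=
  (if j.1 then (-1 : ℂ) ^ r else 1) •
    ((-1 : ℂ) ^ r • (if xor i.1 j.1 then fU r j.2 i.2 else eU r j.2 i.2))

/-- The value of the evaluation homomorphism `ev : Y(Q(n)) → U(Q(n))` on `T^{(r)}_{i,j}`:
`ev(T^{(1)}_{i,j}) = -e_{j,i}`, `ev(T^{(1)}_{-i,j}) = -f_{j,i}` for `i, j > 0`,
`ev(T^{(0)}_{i,j}) = δ_{ij}` and `ev(T^{(r)}_{i,j}) = 0` for `r > 1` (with the values on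
the remaining generators forced by `T^{(r)}_{-i,-j} = (-1)^r T^{(r)}_{i,j}`). -/
def evval {n : ℕ} (r : ℕ) (i j : QIdx n) : UQ n :=
  (if j.1 then (-1 : ℂ) ^ r else 1) •
    (match r with
      | 0 => if xor i.1 j.1 then 0 else algebraMap ℂ (UQ n) (kd i.2 j.2)
      | 1 => -(if xor i.1 j.1 then Uf j.2 i.2 else Ue j.2 i.2)
      | _ + 2 => 0)

/-- The value of `ēv = α ∘ ev : Y(Q(n)) → U(Q(n))` on `T^{(r)}_{i,j}`, where `α` is the
principal anti-automorphism of `U(Q(n))`:  `ēv(T^{(1)}_{i,j}) = e_{j,i}`,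
`ēv(T^{(1)}_{-i,j}) = f_{j,i}` for `i, j > 0`, `ēv(T^{(0)}_{i,j}) = δ_{ij}`,
`ēv(T^{(r)}_{i,j}) = 0` for `r > 1`. -/
def bevval {n : ℕ} (r : ℕ) (i j : QIdx n) : UQ n :=
  (if j.1 then (-1 : ℂ) ^ r else 1) •
    (match r with
      | 0 => if xor i.1 j.1 then 0 else algebraMap ℂ (UQ n) (kd i.2 j.2)
      | 1 => (if xor i.1 j.1 then Uf j.2 i.2 else Ue j.2 i.2)
      | _ + 2 => 0)

/-- The sum `Σ_{p_1,…,p_{r-1}} Σ_{l ≥ i_1 ≥ i_2 ≥ … ≥ i_r ≥ 1}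
Π_{a=1}^r (x^{i_a}_{p_{a-1},p_a} + (-1)^{r-a} ξ^{i_a}_{p_{a-1},p_a})`
(with `p_0 = p`, `p_r = q`), an element of `U(Q(m))^{⊗l}`. -/
def chainProdDec (m l : ℕ) (r : ℕ) (p q : Fin m) : TQ m l :=
  ∑ c : Fin (r + 1) → Fin m, ∑ iv : Fin r → Fin l,
    (if c 0 = p ∧ c (Fin.last r) = q ∧ (∀ a b : Fin r, a ≤ b → iv b ≤ iv a)
      then (1 : ℂ) else 0) •
      (List.ofFn fun a : Fin r =>
        xT (iv a) (c a.castSucc) (c a.succ) +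
          ((-1 : ℂ) ^ (r - 1 - a.val)) • xiT (iv a) (c a.castSucc) (c a.succ)).prod

/-- The sum `Σ_{p_1,…,p_{r-1}} Σ_{1 ≤ i_1 < i_2 < … < i_r ≤ l}
Π_{a=1}^r (x^{i_a}_{p_{a-1},p_a} + (-1)^{r-a} ξ^{i_a}_{p_{a-1},p_a})`
(with `p_0 = p`, `p_r = q`), an element of `U(Q(m))^{⊗l}`. -/
def chainProdInc (m l : ℕ) (r : ℕ) (p q : Fin m) : TQ m l :=
  ∑ c : Fin (r + 1) → Fin m, ∑ iv : Fin r → Fin l,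
    (if c 0 = p ∧ c (Fin.last r) = q ∧ (∀ a b : Fin r, a < b → iv a < iv b)
      then (1 : ℂ) else 0) •
      (List.ofFn fun a : Fin r =>
        xT (iv a) (c a.castSucc) (c a.succ) +
          ((-1 : ℂ) ^ (r - 1 - a.val)) • xiT (iv a) (c a.castSucc) (c a.succ)).prod

/-- The elements `z^{(r)}_{±q,p}` of `U(Q(m))^{⊗l}`:  the even (`sgn = false`,
giving `z^{(r)}_{q,p}`) resp. odd (`sgn = true`, giving `z^{(r)}_{-q,p}`) component of
`chainProdDec`, computed using the parity involution `σT` of `U(Q(m))^{⊗l}`;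
`z^{(0)}_{q,p} = δ_{qp}`, `z^{(0)}_{-q,p} = 0`. -/
def zDec {m l : ℕ} (σT : TQ m l →ₐ[ℂ] TQ m l) :
    ℕ → Bool → Fin m → Fin m → TQ m l
  | 0, sgn, q, p => if sgn then 0 else algebraMap ℂ (TQ m l) (kd q p)
  | r + 1, sgn, q, p =>
      (2⁻¹ : ℂ) • (chainProdDec m l (r + 1) p q +
        (if sgn then (-1 : ℂ) else 1) • σT (chainProdDec m l (r + 1) p q))

/-- The elements `z̃^{(r)}_{±q,p}` of `U(Q(m))^{⊗l}` (as `zDec`, with increasing chains). -/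
def zInc {m l : ℕ} (σT : TQ m l →ₐ[ℂ] TQ m l) :
    ℕ → Bool → Fin m → Fin m → TQ m l
  | 0, sgn, q, p => if sgn then 0 else algebraMap ℂ (TQ m l) (kd q p)
  | r + 1, sgn, q, p =>
      (2⁻¹ : ℂ) • (chainProdInc m l (r + 1) p q +
        (if sgn then (-1 : ℂ) else 1) • σT (chainProdInc m l (r + 1) p q))

/-- The explicit formula for the antipode value `S(T^{(r)}_{i,j})` (`r ≥ 1`):
`S(T^{(r)}_{i,j}) = Σ_{m=1}^{r} (-1)^m Σ_{i_1,…,i_{m-1}} Σ_{r_1+⋯+r_m=r, r_a>0}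
(-1)^{ν(i,i_1,…,i_{m-1},j)} T^{(r_1)}_{i,i_1} ⋯ T^{(r_m)}_{i_{m-1},j}` where
`ν(i_0,…,i_m) = Σ_{0≤k<s≤m-1} (p(i_k)+p(i_{k+1}))(p(i_s)+p(i_{s+1}))`. -/
def STval {n : ℕ} (r : ℕ) (i j : QIdx n) : YQ n :=
  ∑ m : Fin r,
    ((-1 : ℂ) ^ (m.val + 1)) •
      ∑ ch : Fin (m.val + 2) → QIdx n, ∑ c : Fin (m.val + 1) → Fin (r + 1),
        (if ch 0 = i ∧ ch (Fin.last (m.val + 1)) = j ∧ (∀ a, 1 ≤ (c a).val) ∧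
              (∑ a, (c a).val) = r
          then ((-1 : ℂ) ^ (∑ a : Fin (m.val + 1), ∑ b : Fin (m.val + 1),
              if a < b then
                (qpar (ch a.castSucc) + qpar (ch a.succ)) *
                  (qpar (ch b.castSucc) + qpar (ch b.succ))
              else 0))
          else 0) •
        (List.ofFn fun a : Fin (m.val + 1) =>
          TY (c a).val (ch a.castSucc) (ch a.succ)).prod

/-! ### Auxiliary development for Statement 5 -/

set_option maxHeartbeats 1000000

section Stmt5Aux

variable {n : ℕ}

lemma rel_ee (i j k l : Fin n) :
    Ue i j * Ue k l - Ue k l * Ue i j = kd j k • Ue i l - kd l i • Ue k j := by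
  have h := RingQuot.mkAlgHom_rel ℂ (QRel.ee i j k l)
  simpa only [map_sub, map_mul, map_smul, Ue] using h

lemma rel_ef (i j k l : Fin n) :
    Ue i j * Uf k l - Uf k l * Ue i j = kd j k • Uf i l - kd l i • Uf k j := by
  have h := RingQuot.mkAlgHom_rel ℂ (QRel.ef i j k l)
  simpa only [map_sub, map_mul, map_smul, Ue, Uf] using h

lemma rel_ff (i j k l : Fin n) :
    Uf i j * Uf k l + Uf k l * Uf i j = kd j k • Ue i l + kd l i • Ue k j := by
  have h := RingQuot.mkAlgHom_rel ℂ (QRel.ff i j k l)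
  simpa only [map_add, map_mul, map_smul, Ue, Uf] using h

lemma rel_fe (i j k l : Fin n) :
    Uf i j * Ue k l - Ue k l * Uf i j = kd j k • Uf i l - kd l i • Uf k j := by
  have h := rel_ef k l i j
  have h2 : -(Ue k l * Uf i j - Uf i j * Ue k l) = -(kd l i • Uf k j - kd j k • Uf i l) := by
    rw [h]
  simpa only [neg_sub] using h2

/-- matrices over `UQ n` -/
abbrev Mat (n : ℕ) := Matrix (Fin n) (Fin n) (UQ n)

def Em (n : ℕ) : Mat n := Matrix.of fun i j => Ue i j
def Fm (n : ℕ) : Mat n := Matrix.of fun i j => Uf i j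
def Lm (n : ℕ) (r : ℕ) : Mat n := Matrix.of fun i j => eU r i j
def Km (n : ℕ) (r : ℕ) : Mat n := Matrix.of fun i j => fU r i j
def Gm {n : ℕ} (g : UQ n) : Mat n := Matrix.of fun i j => if i = j then g else 0
def Dm (n : ℕ) (a b : Fin n) : Mat n := Matrix.of fun i j => if i = a ∧ j = b then 1 else 0

@[simp] lemma Em_apply (i j : Fin n) : Em n i j = Ue i j := rfl
@[simp] lemma Fm_apply (i j : Fin n) : Fm n i j = Uf i j := rfl
@[simp] lemma Lm_apply (r : ℕ) (i j : Fin n) : Lm n r i j = eU r i j := rfl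
@[simp] lemma Km_apply (r : ℕ) (i j : Fin n) : Km n r i j = fU r i j := rfl

lemma mul_Gm_apply (X : Mat n) (g : UQ n) (i j : Fin n) :
    (X * Gm g) i j = X i j * g := by
  simp [Matrix.mul_apply, Gm, mul_ite, mul_zero]

lemma Gm_mul_apply (X : Mat n) (g : UQ n) (i j : Fin n) :
    (Gm g * X) i j = g * X i j := by
  simp [Matrix.mul_apply, Gm, ite_mul, zero_mul]

lemma mul_Dm_apply (X : Mat n) (a b i j : Fin n) :
    (X * Dm n a b) i j = if j = b then X i a else 0 := by
  simp only [Matrix.mul_apply, Dm, Matrix.of_apply, mul_ite, mul_one, mul_zero]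
  by_cases hj : j = b <;> simp [hj]

lemma Dm_mul_apply (X : Mat n) (a b i j : Fin n) :
    (Dm n a b * X) i j = if i = a then X b j else 0 := by
  simp only [Matrix.mul_apply, Dm, Matrix.of_apply, ite_mul, one_mul, zero_mul]
  by_cases hi : i = a <;> simp [hi]

lemma Lm_zero : Lm n 0 = 1 := by
  ext i j
  by_cases hij : i = j <;>
    simp [Lm, eU, efU, kd, Matrix.one_apply, hij]

lemma Km_zero : Km n 0 = 0 := by
  ext i j
  simp [Km, fU, efU]

lemma Lm_succ (r : ℕ) :
    Lm n (r + 1) = Em n * Lm n r + ((-1 : ℂ) ^ r) • (Fm n * Km n r) := by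
  ext i j
  simp [Lm, Km, Em, Fm, eU, fU, efU, Matrix.mul_apply, Matrix.add_apply,
    Matrix.smul_apply, Finset.smul_sum]

lemma Km_succ (r : ℕ) :
    Km n (r + 1) = Em n * Km n r + ((-1 : ℂ) ^ r) • (Fm n * Lm n r) := by
  ext i j
  simp [Lm, Km, Em, Fm, eU, fU, efU, Matrix.mul_apply, Matrix.add_apply,
    Matrix.smul_apply, Finset.smul_sum]

lemma neg_one_smul_mat (x : Mat n) : ((-1 : ℂ)) • x = -x := neg_one_smul ℂ x

lemma Lm_succ_even {r : ℕ} (hr : Even r) :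
    Lm n (r + 1) = Em n * Lm n r + Fm n * Km n r := by
  rw [Lm_succ, hr.neg_one_pow, one_smul]

lemma Lm_succ_odd {r : ℕ} (hr : Odd r) :
    Lm n (r + 1) = Em n * Lm n r - Fm n * Km n r := by
  rw [Lm_succ, hr.neg_one_pow, neg_one_smul_mat, ← sub_eq_add_neg]

lemma Km_succ_even {r : ℕ} (hr : Even r) :
    Km n (r + 1) = Em n * Km n r + Fm n * Lm n r := by
  rw [Km_succ, hr.neg_one_pow, one_smul]

lemma Km_succ_odd {r : ℕ} (hr : Odd r) :
    Km n (r + 1) = Em n * Km n r - Fm n * Lm n r := by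
  rw [Km_succ, hr.neg_one_pow, neg_one_smul_mat, ← sub_eq_add_neg]

/-- right recursion -/
lemma RRmat (n : ℕ) : ∀ r : ℕ,
    Lm n (r + 1) = Lm n r * Em n - Km n r * Fm n ∧
    Km n (r + 1) = Lm n r * Fm n - Km n r * Em n := by
  intro r
  induction r with
  | zero =>
    constructor <;>
      simp [Lm_succ, Km_succ, Lm_zero, Km_zero]
  | succ r ih =>
    obtain ⟨ihL, ihK⟩ := ih
    rcases Nat.even_or_odd r with hr | hr
    · have hr1 : Odd (r + 1) := hr.add_one
      constructor
      · conv_lhs => rw [Lm_succ_odd hr1, ihL, ihK]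
        conv_rhs => rw [Lm_succ_even hr, Km_succ_even hr]
        simp only [mul_sub, sub_mul, mul_add, add_mul, mul_assoc]
        abel
      · conv_lhs => rw [Km_succ_odd hr1, ihL, ihK]
        conv_rhs => rw [Lm_succ_even hr, Km_succ_even hr]
        simp only [mul_sub, sub_mul, mul_add, add_mul, mul_assoc]
        abel
    · have hr1 : Even (r + 1) := hr.add_one
      constructor
      · conv_lhs => rw [Lm_succ_even hr1, ihL, ihK]
        conv_rhs => rw [Lm_succ_odd hr, Km_succ_odd hr]
        simp only [mul_sub, sub_mul, mul_add, add_mul, mul_assoc]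
        abel
      · conv_lhs => rw [Km_succ_even hr1, ihL, ihK]
        conv_rhs => rw [Lm_succ_odd hr, Km_succ_odd hr]
        simp only [mul_sub, sub_mul, mul_add, add_mul, mul_assoc]
        abel

section RmatSec

variable {n : ℕ}

lemma base1 (k l' : Fin n) :
    Em n * Gm (Ue k l') - Gm (Ue k l') * Em n = Em n * Dm n l' k - Dm n l' k * Em n := by
  ext i j
  simp only [Matrix.sub_apply, mul_Gm_apply, Gm_mul_apply, mul_Dm_apply, Dm_mul_apply, Em_apply]
  have := rel_ee i j k l'
  rw [this]
  by_cases h2 : i = l'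
  · subst h2
    by_cases h1 : j = k <;> simp [kd, h1]
  · have h2' : ¬(l' = i) := fun hh => h2 hh.symm
    by_cases h1 : j = k <;> simp [kd, h1, h2, h2']


lemma base2 (k l' : Fin n) :
    Fm n * Gm (Ue k l') - Gm (Ue k l') * Fm n = Fm n * Dm n l' k - Dm n l' k * Fm n := by
  ext i j
  simp only [Matrix.sub_apply, mul_Gm_apply, Gm_mul_apply, mul_Dm_apply, Dm_mul_apply, Fm_apply]
  have := rel_fe i j k l'
  rw [this]
  by_cases h2 : i = l'
  · subst h2
    by_cases h1 : j = k <;> simp [kd, h1]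
  · have h2' : ¬(l' = i) := fun hh => h2 hh.symm
    by_cases h1 : j = k <;> simp [kd, h1, h2, h2']


lemma base3 (k l' : Fin n) :
    Em n * Gm (Uf k l') - Gm (Uf k l') * Em n = Fm n * Dm n l' k - Dm n l' k * Fm n := by
  ext i j
  simp only [Matrix.sub_apply, mul_Gm_apply, Gm_mul_apply, mul_Dm_apply, Dm_mul_apply,
    Em_apply, Fm_apply]
  have := rel_ef i j k l'
  rw [this]
  by_cases h2 : i = l'
  · subst h2
    by_cases h1 : j = k <;> simp [kd, h1]
  · have h2' : ¬(l' = i) := fun hh => h2 hh.symm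
    by_cases h1 : j = k <;> simp [kd, h1, h2, h2']


lemma base4 (k l' : Fin n) :
    Fm n * Gm (Uf k l') + Gm (Uf k l') * Fm n = Em n * Dm n l' k + Dm n l' k * Em n := by
  ext i j
  simp only [Matrix.add_apply, mul_Gm_apply, Gm_mul_apply, mul_Dm_apply, Dm_mul_apply,
    Em_apply, Fm_apply]
  have := rel_ff i j k l'
  rw [this]
  by_cases h2 : i = l'
  · subst h2
    by_cases h1 : j = k <;> simp [kd, h1]
  · have h2' : ¬(l' = i) := fun hh => h2 hh.symm
    by_cases h1 : j = k <;> simp [kd, h1, h2, h2']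


section AuxRing
variable {A : Type*} [Ring A]


theorem auxA1e (E F L K G D : A) :
    (E*L + F*K)*G - G*(E*L + F*K) - ((E*L + F*K)*D - D*(E*L + F*K)) =
    E*(L*G - G*L - (L*D - D*L)) + (E*G - G*E - (E*D - D*E))*L +
      (F*(K*G - G*K - (K*D - D*K)) + (F*G - G*F - (F*D - D*F))*K) := by
  noncomm_ring

theorem auxA3e (E F L K H D : A) :
    (E*L + F*K)*H - H*(E*L + F*K) - ((E*K + F*L)*D + -(D*(E*K + F*L))) =
    E*(L*H - H*L - (K*D + D*K)) + (E*H - H*E - (F*D - D*F))*L +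
      (F*(K*H + H*K - (L*D - D*L)) - (F*H + H*F - (E*D + D*E))*K) := by
  noncomm_ring

theorem auxA4e (E F L K H D : A) :
    (E*K + F*L)*H + H*(E*K + F*L) - ((E*L + F*K)*D - -(D*(E*L + F*K))) =
    E*(K*H + H*K - (L*D - D*L)) - (E*H - H*E - (F*D - D*F))*K +
      (F*(L*H - H*L - (K*D + D*K)) + (F*H + H*F - (E*D + D*E))*L) := by
  noncomm_ring

theorem auxA1o (E F L K G D : A) :
    (E*L - F*K)*G - G*(E*L - F*K) - ((E*L - F*K)*D - D*(E*L - F*K)) =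
    E*(L*G - G*L - (L*D - D*L)) + (E*G - G*E - (E*D - D*E))*L -
      (F*(K*G - G*K - (K*D - D*K)) + (F*G - G*F - (F*D - D*F))*K) := by
  noncomm_ring

theorem auxA3o (E F L K H D : A) :
    (E*L - F*K)*H - H*(E*L - F*K) - ((E*K - F*L)*D + D*(E*K - F*L)) =
    E*(L*H - H*L - (K*D + -(D*K))) + (E*H - H*E - (F*D - D*F))*L -
      (F*(K*H + H*K - (L*D - -(D*L))) - (F*H + H*F - (E*D + D*E))*K) := by
  noncomm_ring

theorem auxA4o (E F L K H D : A) :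
    (E*K - F*L)*H + H*(E*K - F*L) - ((E*L - F*K)*D - D*(E*L - F*K)) =
    E*(K*H + H*K - (L*D - -(D*L))) - (E*H - H*E - (F*D - D*F))*K -
      (F*(L*H - H*L - (K*D + -(D*K))) + (F*H + H*F - (E*D + D*E))*L) := by
  noncomm_ring
end AuxRing

lemma Rmat (n : ℕ) (k l' : Fin n) : ∀ r : ℕ,
    (Lm n r * Gm (Ue k l') - Gm (Ue k l') * Lm n r = Lm n r * Dm n l' k - Dm n l' k * Lm n r) ∧
    (Km n r * Gm (Ue k l') - Gm (Ue k l') * Km n r = Km n r * Dm n l' k - Dm n l' k * Km n r) ∧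
    (Lm n r * Gm (Uf k l') - Gm (Uf k l') * Lm n r =
      Km n r * Dm n l' k + ((-1 : ℂ) ^ r) • (Dm n l' k * Km n r)) ∧
    (Km n r * Gm (Uf k l') + Gm (Uf k l') * Km n r =
      Lm n r * Dm n l' k - ((-1 : ℂ) ^ r) • (Dm n l' k * Lm n r)) := by
  intro r
  induction r with
  | zero =>
    refine ⟨?_, ?_, ?_, ?_⟩ <;> simp [Lm_zero, Km_zero]
  | succ r ih =>
    obtain ⟨ih1, ih2, ih3, ih4⟩ := ih
    set G := Gm (Ue k l') with hG
    set H := Gm (Uf k l') with hH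
    set D := Dm n l' k with hD
    set E := Em n with hE
    set F := Fm n with hF
    set L := Lm n r with hLr
    set K := Km n r with hKr
    have hb1 := base1 (n := n) k l'
    have hb2 := base2 (n := n) k l'
    have hb3 := base3 (n := n) k l'
    have hb4 := base4 (n := n) k l'
    simp only [← hG, ← hH, ← hD, ← hE, ← hF] at hb1 hb2 hb3 hb4
    rcases Nat.even_or_odd r with hr | hr
    · have hr1 : Odd (r + 1) := hr.add_one
      rw [hr.neg_one_pow, one_smul] at ih3 ih4
      rw [Lm_succ_even hr, Km_succ_even hr, ← hE, ← hF, ← hLr, ← hKr, hr1.neg_one_pow]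
      simp only [neg_one_smul_mat]
      refine ⟨?_, ?_, ?_, ?_⟩
      · have key := auxA1e E F L K G D
        rw [ih1, ih2, hb1, hb2] at key
        simp only [sub_self, mul_zero, zero_mul, add_zero, zero_add, sub_zero, neg_zero] at key
        exact sub_eq_zero.mp key
      · have key := auxA1e E F K L G D
        rw [ih1, ih2, hb1, hb2] at key
        simp only [sub_self, mul_zero, zero_mul, add_zero, zero_add, sub_zero, neg_zero] at key
        exact sub_eq_zero.mp key
      · have key := auxA3e E F L K H D
        rw [ih3, ih4, hb3, hb4] at key
        simp only [sub_self, mul_zero, zero_mul, add_zero, zero_add, sub_zero, neg_zero] at key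
        exact sub_eq_zero.mp key
      · have key := auxA4e E F L K H D
        rw [ih3, ih4, hb3, hb4] at key
        simp only [sub_self, mul_zero, zero_mul, add_zero, zero_add, sub_zero, neg_zero] at key
        exact sub_eq_zero.mp key
    · have hr1 : Even (r + 1) := hr.add_one
      rw [hr.neg_one_pow, neg_one_smul_mat] at ih3 ih4
      rw [Lm_succ_odd hr, Km_succ_odd hr, ← hE, ← hF, ← hLr, ← hKr, hr1.neg_one_pow]
      simp only [one_smul]
      refine ⟨?_, ?_, ?_, ?_⟩
      · have key := auxA1o E F L K G D
        rw [ih1, ih2, hb1, hb2] at key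
        simp only [sub_self, mul_zero, zero_mul, add_zero, zero_add, sub_zero, neg_zero] at key
        exact sub_eq_zero.mp key
      · have key := auxA1o E F K L G D
        rw [ih1, ih2, hb1, hb2] at key
        simp only [sub_self, mul_zero, zero_mul, add_zero, zero_add, sub_zero, neg_zero] at key
        exact sub_eq_zero.mp key
      · have key := auxA3o E F L K H D
        rw [ih3, ih4, hb3, hb4] at key
        simp only [sub_self, mul_zero, zero_mul, add_zero, zero_add, sub_zero, neg_zero] at key
        exact sub_eq_zero.mp key
      · have key := auxA4o E F L K H D
        rw [ih3, ih4, hb3, hb4] at key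
        simp only [sub_self, mul_zero, zero_mul, add_zero, zero_add, sub_zero, neg_zero] at key
        exact sub_eq_zero.mp key

end RmatSec

section Scalar

variable {n : ℕ}

lemma eU_succ (r : ℕ) (i j : Fin n) :
    eU (r + 1) i j = ∑ k, (eU r i k * Ue k j - fU r i k * Uf k j) := by
  have h2 := congrFun (congrFun (RRmat n r).1 i) j
  simp only [Matrix.sub_apply, Matrix.mul_apply, Lm_apply, Km_apply, Em_apply, Fm_apply] at h2
  have h3 : eU (r + 1) i j = ∑ x : Fin n, eU r i x * Ue x j - ∑ x : Fin n, fU r i x * Uf x j := h2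
  rw [h3, ← Finset.sum_sub_distrib]

lemma fU_succ (r : ℕ) (i j : Fin n) :
    fU (r + 1) i j = ∑ k, (eU r i k * Uf k j - fU r i k * Ue k j) := by
  have h2 := congrFun (congrFun (RRmat n r).2 i) j
  simp only [Matrix.sub_apply, Matrix.mul_apply, Lm_apply, Km_apply, Em_apply, Fm_apply] at h2
  have h3 : fU (r + 1) i j = ∑ x : Fin n, eU r i x * Uf x j - ∑ x : Fin n, fU r i x * Ue x j := h2
  rw [h3, ← Finset.sum_sub_distrib]

lemma eU_one (i j : Fin n) : eU 1 i j = Ue i j := by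
  have hm : Lm n 1 = Em n := by
    rw [(RRmat n 0).1, Lm_zero, Km_zero]
    simp
  exact congrFun (congrFun hm i) j

lemma fU_one (i j : Fin n) : fU 1 i j = Uf i j := by
  have hm : Km n 1 = Fm n := by
    rw [(RRmat n 0).2, Lm_zero, Km_zero]
    simp
  exact congrFun (congrFun hm i) j

lemma R1s (r : ℕ) (i j k l' : Fin n) :
    eU r i j * Ue k l' = Ue k l' * eU r i j +
      ((if j = k then eU r i l' else 0) - (if i = l' then eU r k j else 0)) := by
  have h2 := congrFun (congrFun (Rmat n k l' r).1 i) j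
  simp only [Matrix.sub_apply, mul_Gm_apply, Gm_mul_apply, mul_Dm_apply, Dm_mul_apply,
    Lm_apply] at h2
  rw [sub_eq_iff_eq_add] at h2
  rw [h2]; abel

lemma R2s (r : ℕ) (i j k l' : Fin n) :
    fU r i j * Ue k l' = Ue k l' * fU r i j +
      ((if j = k then fU r i l' else 0) - (if i = l' then fU r k j else 0)) := by
  have h2 := congrFun (congrFun (Rmat n k l' r).2.1 i) j
  simp only [Matrix.sub_apply, mul_Gm_apply, Gm_mul_apply, mul_Dm_apply, Dm_mul_apply,
    Km_apply] at h2
  rw [sub_eq_iff_eq_add] at h2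
  rw [h2]; abel

lemma R3s (r : ℕ) (i j k l' : Fin n) :
    eU r i j * Uf k l' = Uf k l' * eU r i j +
      ((if j = k then fU r i l' else 0) +
        ((-1 : ℂ) ^ r) • (if i = l' then fU r k j else 0)) := by
  have h2 := congrFun (congrFun (Rmat n k l' r).2.2.1 i) j
  simp only [Matrix.sub_apply, Matrix.add_apply, Matrix.smul_apply, mul_Gm_apply, Gm_mul_apply,
    mul_Dm_apply, Dm_mul_apply, Lm_apply, Km_apply] at h2
  rw [sub_eq_iff_eq_add] at h2
  rw [h2]; abel

lemma R4s (r : ℕ) (i j k l' : Fin n) :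
    fU r i j * Uf k l' =
      ((if j = k then eU r i l' else 0) -
        ((-1 : ℂ) ^ r) • (if i = l' then eU r k j else 0)) - Uf k l' * fU r i j := by
  have h2 := congrFun (congrFun (Rmat n k l' r).2.2.2 i) j
  simp only [Matrix.sub_apply, Matrix.add_apply, Matrix.smul_apply, mul_Gm_apply, Gm_mul_apply,
    mul_Dm_apply, Dm_mul_apply, Lm_apply, Km_apply] at h2
  exact eq_sub_of_add_eq h2

lemma swap_e (r : ℕ) (i k c : Fin n) (hic : i ≠ c) :
    eU r i k * Ue k c - fU r i k * Uf k c = Ue k c * eU r i k + Uf k c * fU r i k := by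
  rw [R1s, R4s]
  simp only [if_pos rfl, if_neg hic, smul_zero, sub_zero]
  abel

lemma swap_f (r : ℕ) (i k c : Fin n) (hic : i ≠ c) :
    eU r i k * Uf k c - fU r i k * Ue k c = Uf k c * eU r i k - Ue k c * fU r i k := by
  rw [R3s, R2s]
  simp only [if_pos rfl, if_neg hic, smul_zero, add_zero, sub_zero]
  abel

end Scalar

section IdealSec

variable {n l : ℕ}

lemma I_mul_left (h : l ∣ n) {x : UQ n} (hx : x ∈ Ichi n l h) (u : UQ n) :
    u * x ∈ Ichi n l h := by
  have h2 := Submodule.smul_mem (Ichi n l h) u hx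
  rwa [smul_eq_mul] at h2

lemma I_csmul (h : l ∣ n) {x : UQ n} (hx : x ∈ Ichi n l h) (c : ℂ) :
    c • x ∈ Ichi n l h := by
  rw [Algebra.smul_def]
  exact I_mul_left h hx _

lemma red_e (h : l ∣ n) (u : UQ n) (p q : Fin (n / l)) (a b : Fin l) (hba : b.val < a.val) :
    u * Ue (bidx h p a) (bidx h q b)
      - (if a.val = b.val + 1 ∧ p = q then (1 : ℂ) else 0) • u ∈ Ichi n l h := by
  have hx : Ue (bidx h p a) (bidx h q b) -
      algebraMap ℂ (UQ n) (if a.val = b.val + 1 ∧ p = q then 1 else 0) ∈ Ichi n l h :=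
    Submodule.subset_span ⟨p, q, a, b, hba, Or.inl rfl⟩
  have h2 := I_mul_left h hx u
  rw [mul_sub] at h2
  rwa [show u * algebraMap ℂ (UQ n) (if a.val = b.val + 1 ∧ p = q then (1 : ℂ) else 0)
      = (if a.val = b.val + 1 ∧ p = q then (1 : ℂ) else 0) • u by
    rw [← Algebra.commutes, ← Algebra.smul_def]] at h2

lemma red_f (h : l ∣ n) (u : UQ n) (p q : Fin (n / l)) (a b : Fin l) (hba : b.val < a.val) :
    u * Uf (bidx h p a) (bidx h q b) ∈ Ichi n l h :=
  I_mul_left h (Submodule.subset_span ⟨p, q, a, b, hba, Or.inr rfl⟩) u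

lemma bidx_eq_iff (hl : 0 < l) (h : l ∣ n) {p q : Fin (n / l)} {a b : Fin l} :
    bidx h p a = bidx h q b ↔ p = q ∧ a = b := by
  constructor
  · intro he
    have hv : l * p.val + a.val = l * q.val + b.val := congrArg Fin.val he
    have hmod : a.val = b.val := by
      calc a.val = (l * p.val + a.val) % l := by
            rw [Nat.mul_add_mod, Nat.mod_eq_of_lt a.isLt]
        _ = (l * q.val + b.val) % l := by rw [hv]
        _ = b.val := by rw [Nat.mul_add_mod, Nat.mod_eq_of_lt b.isLt]
    have hdiv : p.val = q.val := by
      calc p.val = (l * p.val + a.val) / l := by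
            rw [Nat.mul_add_div hl, Nat.div_eq_of_lt a.isLt, Nat.add_zero]
        _ = (l * q.val + b.val) / l := by rw [hv]
        _ = q.val := by rw [Nat.mul_add_div hl, Nat.div_eq_of_lt b.isLt, Nat.add_zero]
    exact ⟨Fin.ext hdiv, Fin.ext hmod⟩
  · rintro ⟨rfl, rfl⟩; rfl

lemma bidx_ne (hl : 0 < l) (h : l ∣ n) {p q : Fin (n / l)} {a b : Fin l}
    (hab : a.val ≠ b.val) : bidx h p a ≠ bidx h q b := fun he =>
  hab (congrArg Fin.val ((bidx_eq_iff hl h).1 he).2)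

def blockEquiv (hl : 0 < l) (h : l ∣ n) : Fin (n / l) × Fin l ≃ Fin n where
  toFun st := bidx h st.1 st.2
  invFun k := (⟨k.val / l, Nat.div_lt_div_of_lt_of_dvd h k.isLt⟩,
               ⟨k.val % l, Nat.mod_lt _ hl⟩)
  left_inv := by
    rintro ⟨s, t⟩
    have h1 : (l * s.val + t.val) / l = s.val := by
      rw [Nat.mul_add_div hl, Nat.div_eq_of_lt t.isLt, Nat.add_zero]
    have h2 : (l * s.val + t.val) % l = t.val := by
      rw [Nat.mul_add_mod, Nat.mod_eq_of_lt t.isLt]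
    simp [bidx, Prod.ext_iff, Fin.ext_iff, h1, h2]
  right_inv := fun k => Fin.ext (Nat.div_add_mod k.val l)

lemma sum_block {M : Type*} [AddCommMonoid M] (hl : 0 < l) (h : l ∣ n) (g : Fin n → M) :
    ∑ k, g k = ∑ s : Fin (n / l), ∑ t : Fin l, g (bidx h s t) := by
  have h1 : ∑ st : Fin (n / l) × Fin l, g (bidx h st.1 st.2) = ∑ k, g k :=
    Fintype.sum_equiv (blockEquiv hl h) _ _ (fun st => rfl)
  rw [← h1]
  exact Fintype.sum_prod_type _

lemma eU_succ_blocks (hl : 0 < l) (h : l ∣ n) (r : ℕ) (i j : Fin n) :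
    eU (r + 1) i j = ∑ s : Fin (n / l), ∑ t : Fin l,
      (eU r i (bidx h s t) * Ue (bidx h s t) j - fU r i (bidx h s t) * Uf (bidx h s t) j) := by
  rw [eU_succ, sum_block hl h]

lemma fU_succ_blocks (hl : 0 < l) (h : l ∣ n) (r : ℕ) (i j : Fin n) :
    fU (r + 1) i j = ∑ s : Fin (n / l), ∑ t : Fin l,
      (eU r i (bidx h s t) * Uf (bidx h s t) j - fU r i (bidx h s t) * Ue (bidx h s t) j) := by
  rw [fU_succ, sum_block hl h]

end IdealSec

section MainInd

variable {n l : ℕ}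

lemma DE (hl : 0 < l) (h : l ∣ n) : ∀ r : ℕ, ∀ (p q : Fin (n / l)) (a b : Fin l),
    (b.val + r < a.val →
      eU r (bidx h p a) (bidx h q b) ∈ Ichi n l h ∧
      fU r (bidx h p a) (bidx h q b) ∈ Ichi n l h) ∧
    (b.val + r = a.val →
      (eU r (bidx h p a) (bidx h q b) - (if p = q then (1 : UQ n) else 0) ∈ Ichi n l h) ∧
      fU r (bidx h p a) (bidx h q b) ∈ Ichi n l h) := by
  intro r
  induction r with
  | zero =>
    intro p q a b
    have hf0 : fU 0 (bidx h p a) (bidx h q b) = 0 := rfl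
    constructor
    · intro hab
      have hne : (bidx h p a) ≠ (bidx h q b) := bidx_ne hl h (by omega)
      constructor
      · have he0 : eU 0 (bidx h p a) (bidx h q b) = algebraMap ℂ (UQ n) 0 := by
          show algebraMap ℂ (UQ n) (kd _ _) = _
          rw [kd, if_neg hne]
        rw [he0, map_zero]
        exact zero_mem _
      · rw [hf0]; exact zero_mem _
    · intro hab
      have hab' : a.val = b.val := by omega
      constructor
      · by_cases hpq : p = q
        · subst hpq
          have hee : bidx h p a = bidx h p b := by
            apply Fin.ext
            show l * p.val + a.val = l * p.val + b.val
            omega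
          have he0 : eU 0 (bidx h p a) (bidx h p b) = algebraMap ℂ (UQ n) 1 := by
            show algebraMap ℂ (UQ n) (kd _ _) = _
            rw [kd, if_pos hee]
          rw [he0, map_one, if_pos rfl, sub_self]
          exact zero_mem _
        · have hne : bidx h p a ≠ bidx h q b := fun he => hpq ((bidx_eq_iff hl h).1 he).1
          have he0 : eU 0 (bidx h p a) (bidx h q b) = algebraMap ℂ (UQ n) 0 := by
            show algebraMap ℂ (UQ n) (kd _ _) = _
            rw [kd, if_neg hne]
          rw [he0, map_zero, if_neg hpq, sub_self]
          exact zero_mem _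
      · rw [hf0]; exact zero_mem _
  | succ r ih =>
    intro p q a b
    constructor
    -- superdeep case
    · intro hab
      constructor
      · rw [eU_succ_blocks hl h]
        refine Submodule.sum_mem _ fun s _ => Submodule.sum_mem _ fun t _ => ?_
        by_cases hbt : b.val < t.val
        · have h1 := red_e h (eU r (bidx h p a) (bidx h s t)) s q t b hbt
          have h2 := red_f h (fU r (bidx h p a) (bidx h s t)) s q t b hbt
          have h3 : (if t.val = b.val + 1 ∧ s = q then (1 : ℂ) else 0) •
              eU r (bidx h p a) (bidx h s t) ∈ Ichi n l h := by
            by_cases hc : t.val = b.val + 1 ∧ s = q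
            · rw [if_pos hc, one_smul]
              exact ((ih p s a t).1 (by omega)).1
            · rw [if_neg hc, zero_smul]
              exact zero_mem _
          have h4 := add_mem (sub_mem h1 h2) h3
          convert h4 using 1
          abel
        · push_neg at hbt
          have hic : bidx h p a ≠ bidx h q b := bidx_ne hl h (by omega)
          rw [swap_e r _ _ _ hic]
          exact add_mem (I_mul_left h ((ih p s a t).1 (by omega)).1 _)
            (I_mul_left h ((ih p s a t).1 (by omega)).2 _)
      · rw [fU_succ_blocks hl h]
        refine Submodule.sum_mem _ fun s _ => Submodule.sum_mem _ fun t _ => ?_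
        by_cases hbt : b.val < t.val
        · have h1 := red_f h (eU r (bidx h p a) (bidx h s t)) s q t b hbt
          have h2 := red_e h (fU r (bidx h p a) (bidx h s t)) s q t b hbt
          have h3 : (if t.val = b.val + 1 ∧ s = q then (1 : ℂ) else 0) •
              fU r (bidx h p a) (bidx h s t) ∈ Ichi n l h := by
            by_cases hc : t.val = b.val + 1 ∧ s = q
            · rw [if_pos hc, one_smul]
              exact ((ih p s a t).1 (by omega)).2
            · rw [if_neg hc, zero_smul]
              exact zero_mem _
          have h4 := sub_mem h1 (add_mem h2 h3)
          convert h4 using 1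
          abel
        · push_neg at hbt
          have hic : bidx h p a ≠ bidx h q b := bidx_ne hl h (by omega)
          rw [swap_f r _ _ _ hic]
          exact sub_mem (I_mul_left h ((ih p s a t).1 (by omega)).1 _)
            (I_mul_left h ((ih p s a t).1 (by omega)).2 _)
    -- deep case
    · intro hab
      have hb1 : b.val + 1 < l := by have := a.isLt; omega
      constructor
      · have hveq : (if p = q then (1 : UQ n) else 0) =
            ∑ s : Fin (n / l), ∑ t : Fin l, (if s = q then
              (if t = (⟨b.val + 1, hb1⟩ : Fin l) then (if p = q then (1 : UQ n) else 0)
                else 0) else 0) := by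
          simp
        rw [eU_succ_blocks hl h, hveq, ← Finset.sum_sub_distrib]
        refine Submodule.sum_mem _ fun s _ => ?_
        rw [← Finset.sum_sub_distrib]
        refine Submodule.sum_mem _ fun t _ => ?_
        by_cases hbt : b.val < t.val
        · have h1 := red_e h (eU r (bidx h p a) (bidx h s t)) s q t b hbt
          have h2 := red_f h (fU r (bidx h p a) (bidx h s t)) s q t b hbt
          by_cases hc : t = (⟨b.val + 1, hb1⟩ : Fin l) ∧ s = q
          · obtain ⟨hct, hcs⟩ := hc
            subst hct; subst hcs
            rw [if_pos ⟨rfl, rfl⟩, one_smul] at h1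
            rw [if_pos rfl, if_pos rfl]
            have hdeep := ((ih p s a ⟨b.val + 1, hb1⟩).2 (by simp; omega)).1
            have h4 := add_mem (sub_mem h1 h2) hdeep
            convert h4 using 1
            abel
          · have hc2 : ¬(t.val = b.val + 1 ∧ s = q) := by
              intro hh
              exact hc ⟨Fin.ext hh.1, hh.2⟩
            rw [if_neg hc2, zero_smul, sub_zero] at h1
            have hv0 : (if s = q then
                (if t = (⟨b.val + 1, hb1⟩ : Fin l) then (if p = q then (1 : UQ n) else 0)
                  else 0) else 0) = 0 := by
              by_cases hs : s = q
              · by_cases ht : t = (⟨b.val + 1, hb1⟩ : Fin l)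
                · exact absurd ⟨ht, hs⟩ hc
                · simp [hs, ht]
              · simp [hs]
            rw [hv0, sub_zero]
            exact sub_mem h1 h2
        · push_neg at hbt
          have hic : bidx h p a ≠ bidx h q b := bidx_ne hl h (by omega)
          have htne : t ≠ (⟨b.val + 1, hb1⟩ : Fin l) := by
            intro he
            have := congrArg Fin.val he
            simp at this
            omega
          have hv0 : (if s = q then
              (if t = (⟨b.val + 1, hb1⟩ : Fin l) then (if p = q then (1 : UQ n) else 0)
                else 0) else 0) = 0 := by
            by_cases hs : s = q <;> simp [hs, htne]
          rw [hv0, sub_zero, swap_e r _ _ _ hic]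
          exact add_mem (I_mul_left h ((ih p s a t).1 (by omega)).1 _)
            (I_mul_left h ((ih p s a t).1 (by omega)).2 _)
      · rw [fU_succ_blocks hl h]
        refine Submodule.sum_mem _ fun s _ => Submodule.sum_mem _ fun t _ => ?_
        by_cases hbt : b.val < t.val
        · have h1 := red_f h (eU r (bidx h p a) (bidx h s t)) s q t b hbt
          have h2 := red_e h (fU r (bidx h p a) (bidx h s t)) s q t b hbt
          have h3 : (if t.val = b.val + 1 ∧ s = q then (1 : ℂ) else 0) •
              fU r (bidx h p a) (bidx h s t) ∈ Ichi n l h := by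
            by_cases hc : t.val = b.val + 1 ∧ s = q
            · rw [if_pos hc, one_smul]
              exact ((ih p s a t).2 (by omega)).2
            · rw [if_neg hc, zero_smul]
              exact zero_mem _
          have h4 := sub_mem h1 (add_mem h2 h3)
          convert h4 using 1
          abel
        · push_neg at hbt
          have hic : bidx h p a ≠ bidx h q b := bidx_ne hl h (by omega)
          rw [swap_f r _ _ _ hic]
          exact sub_mem (I_mul_left h ((ih p s a t).1 (by omega)).1 _)
            (I_mul_left h ((ih p s a t).1 (by omega)).2 _)

lemma bidx_congr (h : l ∣ n) (p : Fin (n / l)) {x y : Fin l} (hxy : x.val = y.val) :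
    bidx h p x = bidx h p y := congrArg _ (Fin.ext hxy)

lemma Ue_bidx_congr (h : l ∣ n) (p q : Fin (n / l)) {x y : Fin l} (hxy : x.val = y.val) :
    Ue (bidx h p x) (bidx h q x) = Ue (bidx h p y) (bidx h q y) := by
  rw [bidx_congr h p hxy, bidx_congr h q hxy]

lemma Uf_bidx_congr (h : l ∣ n) (p q : Fin (n / l)) {x y : Fin l} (hxy : x.val = y.val) :
    Uf (bidx h p x) (bidx h q x) = Uf (bidx h p y) (bidx h q y) := by
  rw [bidx_congr h p hxy, bidx_congr h q hxy]

lemma neg_smul_UQ (c : ℂ) (x : UQ n) : (-c) • x = -(c • x) := neg_smul c x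

lemma Mmain (hl : 0 < l) (h : l ∣ n) : ∀ r : ℕ, ∀ (p q : Fin (n / l)) (b : Fin l)
    (hbr : b.val + r < l),
    (eU (r + 1) (bidx h p ⟨b.val + r, hbr⟩) (bidx h q b) -
      ∑ k : Fin (r + 1), Ue (bidx h p ⟨b.val + k.val, by have := k.isLt; omega⟩)
        (bidx h q ⟨b.val + k.val, by have := k.isLt; omega⟩) ∈ Ichi n l h) ∧
    (fU (r + 1) (bidx h p ⟨b.val + r, hbr⟩) (bidx h q b) -
      ∑ k : Fin (r + 1), ((-1 : ℂ) ^ k.val) •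
        Uf (bidx h p ⟨b.val + k.val, by have := k.isLt; omega⟩)
          (bidx h q ⟨b.val + k.val, by have := k.isLt; omega⟩) ∈ Ichi n l h) := by
  intro r
  induction r with
  | zero =>
    intro p q b hbr
    constructor
    · rw [eU_one, Fin.sum_univ_one]
      have h1 : (⟨b.val + 0, hbr⟩ : Fin l) = b := Fin.ext (Nat.add_zero _)
      have h2 : Ue (bidx h p ⟨b.val + (0 : Fin 1).val, by omega⟩)
          (bidx h q ⟨b.val + (0 : Fin 1).val, by omega⟩) = Ue (bidx h p b) (bidx h q b) :=
        Ue_bidx_congr h p q (by show b.val + (0 : Fin 1).val = b.val; simp)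
      rw [h1, h2, sub_self]
      exact zero_mem _
    · rw [fU_one, Fin.sum_univ_one]
      have h1 : (⟨b.val + 0, hbr⟩ : Fin l) = b := Fin.ext (Nat.add_zero _)
      have h2 : Uf (bidx h p ⟨b.val + (0 : Fin 1).val, by omega⟩)
          (bidx h q ⟨b.val + (0 : Fin 1).val, by omega⟩) = Uf (bidx h p b) (bidx h q b) :=
        Uf_bidx_congr h p q (by show b.val + (0 : Fin 1).val = b.val; simp)
      rw [h2, h1]
      simp only [Fin.val_zero, pow_zero, one_smul, sub_self]
      exact zero_mem _
  | succ r ihM =>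
    intro p q b hbr
    have hb1 : b.val + 1 < l := by omega
    have hbr2 : b.val + 1 + r < l := by omega
    have ht1b : (⟨b.val + 1, hb1⟩ : Fin l) ≠ b := by
      intro he
      have := congrArg Fin.val he
      simp at this
    have hbt1 : b ≠ (⟨b.val + 1, hb1⟩ : Fin l) := fun he => ht1b he.symm
    have hrow : (⟨b.val + 1 + r, hbr2⟩ : Fin l) = (⟨b.val + (r + 1), hbr⟩ : Fin l) :=
      Fin.ext (by show b.val + 1 + r = b.val + (r + 1); omega)
    have hic : bidx h p (⟨b.val + (r + 1), hbr⟩ : Fin l) ≠ bidx h q b :=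
      bidx_ne hl h (by show b.val + (r + 1) ≠ b.val; omega)
    constructor
    · -- e part
      set S₁ : UQ n := ∑ k : Fin (r + 1),
        Ue (bidx h p ⟨b.val + 1 + k.val, by have := k.isLt; omega⟩)
           (bidx h q ⟨b.val + 1 + k.val, by have := k.isLt; omega⟩) with hS₁
      have ihe : eU (r + 1) (bidx h p ⟨b.val + (r + 1), hbr⟩)
          (bidx h q (⟨b.val + 1, hb1⟩ : Fin l)) - S₁ ∈ Ichi n l h := by
        have h1 : eU (r + 1) (bidx h p ⟨b.val + 1 + r, hbr2⟩)
            (bidx h q (⟨b.val + 1, hb1⟩ : Fin l)) - S₁ ∈ Ichi n l h :=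
          (ihM p q ⟨b.val + 1, hb1⟩ (by show b.val + 1 + r < l; omega)).1
        rwa [hrow] at h1
      have htail : (∑ i : Fin (r + 1), Ue
          (bidx h p ⟨b.val + (Fin.succ i).val, by have := i.isLt; simp only [Fin.val_succ]; omega⟩)
          (bidx h q ⟨b.val + (Fin.succ i).val, by have := i.isLt; simp only [Fin.val_succ]; omega⟩))
          = S₁ := by
        rw [hS₁]
        refine Finset.sum_congr rfl fun k _ => ?_
        exact Ue_bidx_congr h p q
          (by show b.val + (Fin.succ k).val = b.val + 1 + k.val
              simp only [Fin.val_succ]; omega)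
      have hT : (∑ k : Fin (r + 2), Ue (bidx h p ⟨b.val + k.val, by have := k.isLt; omega⟩)
          (bidx h q ⟨b.val + k.val, by have := k.isLt; omega⟩))
          = Ue (bidx h p b) (bidx h q b) + S₁ := by
        rw [Fin.sum_univ_succ, htail]
        congr 1
        all_goals exact Ue_bidx_congr h p q (by show b.val + (0 : Fin (r + 2)).val = b.val; simp)
      have hveq : Ue (bidx h p b) (bidx h q b) + S₁ =
          ∑ s : Fin (n / l), ∑ t : Fin l,
            ((if s = q then (if t = (⟨b.val + 1, hb1⟩ : Fin l) then S₁ else 0) else 0)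
            + (if s = p then (if t = b then Ue (bidx h p b) (bidx h q b) else 0) else 0)) := by
        simp only [Finset.sum_add_distrib]
        simp [Finset.sum_ite_eq', add_comm]
      rw [eU_succ_blocks hl h, hT, hveq, ← Finset.sum_sub_distrib]
      refine Submodule.sum_mem _ fun s _ => ?_
      rw [← Finset.sum_sub_distrib]
      refine Submodule.sum_mem _ fun t _ => ?_
      by_cases hbt : b.val < t.val
      · have h1 := red_e h (eU (r + 1) (bidx h p ⟨b.val + (r + 1), hbr⟩) (bidx h s t)) s q t b hbt
        have h2 := red_f h (fU (r + 1) (bidx h p ⟨b.val + (r + 1), hbr⟩) (bidx h s t)) s q t b hbt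
        by_cases hc : t = (⟨b.val + 1, hb1⟩ : Fin l) ∧ s = q
        · obtain ⟨hct, hcs⟩ := hc
          subst hct; subst hcs
          rw [if_pos ⟨rfl, rfl⟩, one_smul] at h1
          rw [if_pos rfl, if_pos rfl]
          have hv2 : (if s = p then
              (if (⟨b.val + 1, hb1⟩ : Fin l) = b then Ue (bidx h p b) (bidx h s b) else 0)
                else 0) = 0 := by
            simp [ht1b]
          rw [hv2, add_zero]
          have h4 := add_mem (sub_mem h1 h2) ihe
          convert h4 using 1
          abel
        · have hc2 : ¬(t.val = b.val + 1 ∧ s = q) := by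
            intro hh
            exact hc ⟨Fin.ext hh.1, hh.2⟩
          rw [if_neg hc2, zero_smul, sub_zero] at h1
          have htb : t ≠ b := by
            intro he
            have := congrArg Fin.val he
            omega
          have hv0 : ((if s = q then (if t = (⟨b.val + 1, hb1⟩ : Fin l) then S₁ else 0) else 0)
              + (if s = p then (if t = b then Ue (bidx h p b) (bidx h q b) else 0) else 0))
              = 0 := by
            by_cases hs : s = q
            · by_cases ht : t = (⟨b.val + 1, hb1⟩ : Fin l)
              · exact absurd ⟨ht, hs⟩ hc
              · simp [hs, ht, htb]
            · simp [hs, htb]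
          rw [hv0, sub_zero]
          exact sub_mem h1 h2
      · push_neg at hbt
        have ht1 : t ≠ (⟨b.val + 1, hb1⟩ : Fin l) := by
          intro he
          have := congrArg Fin.val he
          simp at this
          omega
        by_cases hstb : t = b ∧ s = p
        · obtain ⟨ht, hs⟩ := hstb
          subst ht; subst hs
          have hv1 : ((if s = q then (if t = (⟨t.val + 1, hb1⟩ : Fin l) then S₁ else 0) else 0)
              + (if s = s then (if t = t then Ue (bidx h s t) (bidx h q t) else 0) else 0))
              = Ue (bidx h s t) (bidx h q t) := by
            simp [hbt1]
          rw [hv1, swap_e (r + 1) _ _ _ hic]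
          have hdeep := ((DE hl h (r + 1) s s (⟨t.val + (r + 1), hbr⟩ : Fin l) t).2 rfl).1
          rw [if_pos rfl] at hdeep
          have hfdeep := ((DE hl h (r + 1) s s (⟨t.val + (r + 1), hbr⟩ : Fin l) t).2 rfl).2
          have h5 := I_mul_left h hdeep (Ue (bidx h s t) (bidx h q t))
          rw [mul_sub, mul_one] at h5
          have h6 := I_mul_left h hfdeep (Uf (bidx h s t) (bidx h q t))
          have h7 := add_mem h5 h6
          convert h7 using 1
          abel
        · have hv0 : ((if s = q then (if t = (⟨b.val + 1, hb1⟩ : Fin l) then S₁ else 0) else 0)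
              + (if s = p then (if t = b then Ue (bidx h p b) (bidx h q b) else 0) else 0))
              = 0 := by
            push_neg at hstb
            by_cases ht : t = b
            · have hsp := hstb ht
              simp [ht1, hsp]
            · simp [ht1, ht]
          rw [hv0, sub_zero, swap_e (r + 1) _ _ _ hic]
          by_cases ht : t = b
          · subst ht
            have hsp : s ≠ p := (not_and.mp hstb) rfl
            have hdeep := ((DE hl h (r + 1) p s (⟨t.val + (r + 1), hbr⟩ : Fin l) t).2 rfl).1
            rw [if_neg (fun he => hsp he.symm), sub_zero] at hdeep
            have hfdeep := ((DE hl h (r + 1) p s (⟨t.val + (r + 1), hbr⟩ : Fin l) t).2 rfl).2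
            exact add_mem (I_mul_left h hdeep _) (I_mul_left h hfdeep _)
          · have htlt : t.val < b.val := by
              rcases lt_or_eq_of_le hbt with h' | h'
              · exact h'
              · exact absurd (Fin.ext h') ht
            have hdd := (DE hl h (r + 1) p s (⟨b.val + (r + 1), hbr⟩ : Fin l) t).1
              (by show t.val + (r + 1) < b.val + (r + 1); omega)
            exact add_mem (I_mul_left h hdd.1 _) (I_mul_left h hdd.2 _)
    · -- f part
      set S₂ : UQ n := ∑ k : Fin (r + 1), ((-1 : ℂ) ^ k.val) •
        Uf (bidx h p ⟨b.val + 1 + k.val, by have := k.isLt; omega⟩)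
           (bidx h q ⟨b.val + 1 + k.val, by have := k.isLt; omega⟩) with hS₂
      have ihf : fU (r + 1) (bidx h p ⟨b.val + (r + 1), hbr⟩)
          (bidx h q (⟨b.val + 1, hb1⟩ : Fin l)) - S₂ ∈ Ichi n l h := by
        have h1 : fU (r + 1) (bidx h p ⟨b.val + 1 + r, hbr2⟩)
            (bidx h q (⟨b.val + 1, hb1⟩ : Fin l)) - S₂ ∈ Ichi n l h :=
          (ihM p q ⟨b.val + 1, hb1⟩ (by show b.val + 1 + r < l; omega)).2
        rwa [hrow] at h1
      have htailf : (∑ i : Fin (r + 1), ((-1 : ℂ) ^ (Fin.succ i).val) • Uf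
          (bidx h p ⟨b.val + (Fin.succ i).val, by have := i.isLt; simp only [Fin.val_succ]; omega⟩)
          (bidx h q ⟨b.val + (Fin.succ i).val, by have := i.isLt; simp only [Fin.val_succ]; omega⟩))
          = -S₂ := by
        rw [hS₂, ← Finset.sum_neg_distrib]
        refine Finset.sum_congr rfl fun k _ => ?_
        rw [Uf_bidx_congr h p q
          (x := ⟨b.val + (Fin.succ k).val, by have := k.isLt; simp only [Fin.val_succ]; omega⟩)
          (y := ⟨b.val + 1 + k.val, by have := k.isLt; omega⟩)
          (by show b.val + (Fin.succ k).val = b.val + 1 + k.val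
              simp only [Fin.val_succ]; omega)]
        rw [show ((-1 : ℂ) ^ (Fin.succ k).val) = -((-1 : ℂ) ^ k.val) by
          simp only [Fin.val_succ, pow_succ, mul_neg_one]]
        rw [neg_smul_UQ]
      have hT : (∑ k : Fin (r + 2), ((-1 : ℂ) ^ k.val) •
          Uf (bidx h p ⟨b.val + k.val, by have := k.isLt; omega⟩)
            (bidx h q ⟨b.val + k.val, by have := k.isLt; omega⟩))
          = Uf (bidx h p b) (bidx h q b) - S₂ := by
        rw [Fin.sum_univ_succ, htailf]
        have h0 : ((-1 : ℂ) ^ ((0 : Fin (r + 2)).val)) •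
            Uf (bidx h p ⟨b.val + (0 : Fin (r + 2)).val, by simp only [Fin.val_zero]; omega⟩)
              (bidx h q ⟨b.val + (0 : Fin (r + 2)).val, by simp only [Fin.val_zero]; omega⟩)
            = Uf (bidx h p b) (bidx h q b) := by
          rw [Uf_bidx_congr h p q (by show b.val + (0 : Fin (r + 2)).val = b.val; simp)]
          rw [show ((-1 : ℂ) ^ ((0 : Fin (r + 2)).val)) = 1 by simp, one_smul]
        rw [h0]
        abel
      have hveq : Uf (bidx h p b) (bidx h q b) - S₂ =
          ∑ s : Fin (n / l), ∑ t : Fin l,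
            ((if s = q then (if t = (⟨b.val + 1, hb1⟩ : Fin l) then -S₂ else 0) else 0)
            + (if s = p then (if t = b then Uf (bidx h p b) (bidx h q b) else 0) else 0)) := by
        simp only [Finset.sum_add_distrib]
        simp [Finset.sum_ite_eq', sub_eq_add_neg, add_comm]
      rw [fU_succ_blocks hl h, hT, hveq, ← Finset.sum_sub_distrib]
      refine Submodule.sum_mem _ fun s _ => ?_
      rw [← Finset.sum_sub_distrib]
      refine Submodule.sum_mem _ fun t _ => ?_
      by_cases hbt : b.val < t.val
      · have h1 := red_f h (eU (r + 1) (bidx h p ⟨b.val + (r + 1), hbr⟩) (bidx h s t)) s q t b hbt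
        have h2 := red_e h (fU (r + 1) (bidx h p ⟨b.val + (r + 1), hbr⟩) (bidx h s t)) s q t b hbt
        by_cases hc : t = (⟨b.val + 1, hb1⟩ : Fin l) ∧ s = q
        · obtain ⟨hct, hcs⟩ := hc
          subst hct; subst hcs
          rw [if_pos ⟨rfl, rfl⟩, one_smul] at h2
          rw [if_pos rfl, if_pos rfl]
          have hv2 : (if s = p then
              (if (⟨b.val + 1, hb1⟩ : Fin l) = b then Uf (bidx h p b) (bidx h s b) else 0)
                else 0) = 0 := by
            simp [ht1b]
          rw [hv2, add_zero]
          have h4 := sub_mem (sub_mem h1 h2) ihf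
          convert h4 using 1
          abel
        · have hc2 : ¬(t.val = b.val + 1 ∧ s = q) := by
            intro hh
            exact hc ⟨Fin.ext hh.1, hh.2⟩
          rw [if_neg hc2, zero_smul, sub_zero] at h2
          have htb : t ≠ b := by
            intro he
            have := congrArg Fin.val he
            omega
          have hv0 : ((if s = q then (if t = (⟨b.val + 1, hb1⟩ : Fin l) then -S₂ else 0) else 0)
              + (if s = p then (if t = b then Uf (bidx h p b) (bidx h q b) else 0) else 0))
              = 0 := by
            by_cases hs : s = q
            · by_cases ht : t = (⟨b.val + 1, hb1⟩ : Fin l)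
              · exact absurd ⟨ht, hs⟩ hc
              · simp [hs, ht, htb]
            · simp [hs, htb]
          rw [hv0, sub_zero]
          exact sub_mem h1 h2
      · push_neg at hbt
        have ht1 : t ≠ (⟨b.val + 1, hb1⟩ : Fin l) := by
          intro he
          have := congrArg Fin.val he
          simp at this
          omega
        by_cases hstb : t = b ∧ s = p
        · obtain ⟨ht, hs⟩ := hstb
          subst ht; subst hs
          have hv1 : ((if s = q then (if t = (⟨t.val + 1, hb1⟩ : Fin l) then -S₂ else 0) else 0)
              + (if s = s then (if t = t then Uf (bidx h s t) (bidx h q t) else 0) else 0))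
              = Uf (bidx h s t) (bidx h q t) := by
            simp [hbt1]
          rw [hv1, swap_f (r + 1) _ _ _ hic]
          have hdeep := ((DE hl h (r + 1) s s (⟨t.val + (r + 1), hbr⟩ : Fin l) t).2 rfl).1
          rw [if_pos rfl] at hdeep
          have hfdeep := ((DE hl h (r + 1) s s (⟨t.val + (r + 1), hbr⟩ : Fin l) t).2 rfl).2
          have h5 := I_mul_left h hdeep (Uf (bidx h s t) (bidx h q t))
          rw [mul_sub, mul_one] at h5
          have h6 := I_mul_left h hfdeep (Ue (bidx h s t) (bidx h q t))
          have h7 := sub_mem h5 h6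
          convert h7 using 1
          abel
        · have hv0 : ((if s = q then (if t = (⟨b.val + 1, hb1⟩ : Fin l) then -S₂ else 0) else 0)
              + (if s = p then (if t = b then Uf (bidx h p b) (bidx h q b) else 0) else 0))
              = 0 := by
            push_neg at hstb
            by_cases ht : t = b
            · have hsp := hstb ht
              simp [ht1, hsp]
            · simp [ht1, ht]
          rw [hv0, sub_zero, swap_f (r + 1) _ _ _ hic]
          by_cases ht : t = b
          · subst ht
            have hsp : s ≠ p := (not_and.mp hstb) rfl
            have hdeep := ((DE hl h (r + 1) p s (⟨t.val + (r + 1), hbr⟩ : Fin l) t).2 rfl).1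
            rw [if_neg (fun he => hsp he.symm), sub_zero] at hdeep
            have hfdeep := ((DE hl h (r + 1) p s (⟨t.val + (r + 1), hbr⟩ : Fin l) t).2 rfl).2
            exact sub_mem (I_mul_left h hdeep _) (I_mul_left h hfdeep _)
          · have htlt : t.val < b.val := by
              rcases lt_or_eq_of_le hbt with h' | h'
              · exact h'
              · exact absurd (Fin.ext h') ht
            have hdd := (DE hl h (r + 1) p s (⟨b.val + (r + 1), hbr⟩ : Fin l) t).1
              (by show t.val + (r + 1) < b.val + (r + 1); omega)
            exact sub_mem (I_mul_left h hdd.1 _) (I_mul_left h hdd.2 _)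

end MainInd

end Stmt5Aux

/-- Let `l ∣ n`, `1 ≤ p,q ≤ n/l` and `1 ≤ m ≤ l`.  Then in
`U(Q(n))/I_χ`:
`π(e^{(m)}_{l(p-1)+m, l(q-1)+1}) = Σ_{k=1}^m π(e_{l(p-1)+k, l(q-1)+k})` and
`π(f^{(m)}_{l(p-1)+m, l(q-1)+1}) = Σ_{k=1}^m (-1)^{k-1} π(f_{l(p-1)+k, l(q-1)+k})`. -/
theorem statement5 (n l : ℕ) (hl : 0 < l) (h : l ∣ n) (p q : Fin (n / l))
    (m : ℕ) (hm1 : 1 ≤ m) (hm2 : m ≤ l) :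
    (piq n l h (eU m (bidx h p ⟨m - 1, by omega⟩) (bidx h q ⟨0, hl⟩)) =
      ∑ k : Fin m, piq n l h
        (Ue (bidx h p ⟨k.val, by have := k.isLt; omega⟩)
            (bidx h q ⟨k.val, by have := k.isLt; omega⟩))) ∧
    (piq n l h (fU m (bidx h p ⟨m - 1, by omega⟩) (bidx h q ⟨0, hl⟩)) =
      ∑ k : Fin m, ((-1 : ℂ) ^ k.val) • piq n l h
        (Uf (bidx h p ⟨k.val, by have := k.isLt; omega⟩)
            (bidx h q ⟨k.val, by have := k.isLt; omega⟩))) := by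
  obtain ⟨r, rfl⟩ : ∃ r, m = r + 1 := ⟨m - 1, by omega⟩
  have hbr : (⟨0, hl⟩ : Fin l).val + r < l := by show 0 + r < l; omega
  obtain ⟨hMe, hMf⟩ := Mmain hl h r p q ⟨0, hl⟩ hbr
  have hrow : bidx h p (⟨(⟨0, hl⟩ : Fin l).val + r, hbr⟩ : Fin l)
      = bidx h p ⟨r + 1 - 1, by omega⟩ :=
    bidx_congr h p (by show 0 + r = r + 1 - 1; omega)
  rw [hrow] at hMe hMf
  have hse : (∑ k : Fin (r + 1),
      Ue (bidx h p ⟨(⟨0, hl⟩ : Fin l).val + k.val, by have := k.isLt; omega⟩)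
         (bidx h q ⟨(⟨0, hl⟩ : Fin l).val + k.val, by have := k.isLt; omega⟩))
      = ∑ k : Fin (r + 1), Ue (bidx h p ⟨k.val, by have := k.isLt; omega⟩)
          (bidx h q ⟨k.val, by have := k.isLt; omega⟩) :=
    Finset.sum_congr rfl fun k _ => Ue_bidx_congr h p q (by show 0 + k.val = k.val; omega)
  have hsf : (∑ k : Fin (r + 1), ((-1 : ℂ) ^ k.val) •
      Uf (bidx h p ⟨(⟨0, hl⟩ : Fin l).val + k.val, by have := k.isLt; omega⟩)
         (bidx h q ⟨(⟨0, hl⟩ : Fin l).val + k.val, by have := k.isLt; omega⟩))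
      = ∑ k : Fin (r + 1), ((-1 : ℂ) ^ k.val) •
          Uf (bidx h p ⟨k.val, by have := k.isLt; omega⟩)
             (bidx h q ⟨k.val, by have := k.isLt; omega⟩) :=
    Finset.sum_congr rfl fun k _ => congrArg (fun z => ((-1 : ℂ) ^ k.val) • z)
      (Uf_bidx_congr h p q (by show 0 + k.val = k.val; omega))
  rw [hse] at hMe
  rw [hsf] at hMf
  constructor
  · rw [← map_sum (piq n l h)]
    exact (Submodule.Quotient.eq _).mpr hMe
  · have hq : (∑ k : Fin (r + 1), ((-1 : ℂ) ^ k.val) • piq n l h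
        (Uf (bidx h p ⟨k.val, by have := k.isLt; omega⟩)
            (bidx h q ⟨k.val, by have := k.isLt; omega⟩)))
        = piq n l h (∑ k : Fin (r + 1), ((-1 : ℂ) ^ k.val) •
            Uf (bidx h p ⟨k.val, by have := k.isLt; omega⟩)
               (bidx h q ⟨k.val, by have := k.isLt; omega⟩)) := by
      rw [map_sum (piq n l h)]
      exact Finset.sum_congr rfl fun k _ => (map_smul (piq n l h) _ _).symm
    rw [hq]
    exact (Submodule.Quotient.eq _).mpr hMf
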